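/- With τ_n the first time of the minimum of S_0,...,S_n, for each fixed i ∈ ℕ, each k with i ≤ k ≤ n, and each Borel set A ⊆ ℝ, one has P(S_{τ_n − i} − S_{τ_n} ∈ A, τ_n = k) = P(−S_i ∈ A | M_k < 0) · P(τ_n = k), where M_k = max_{1≤j≤k} S_j. -/

import Mathlib

open MeasureTheory ProbabilityTheory Filter


noncomputable def psum (k m : ℕ) (x : Fin k → ℝ) : ℝ :=
  ∑ l ∈ Finset.range m, if h : l < k then x ⟨l, h⟩ else 0

lemma psum_meas (k m : ℕ) : Measurable (psum k m) := by
  unfold psum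
  exact Finset.measurable_sum _ fun l _ => by
    by_cases h : l < k
    · simpa [h] using measurable_pi_apply (⟨l, h⟩ : Fin k)
    · simp [h]

lemma psum_zero (k : ℕ) (x : Fin k → ℝ) : psum k 0 x = 0 := by simp [psum]

lemma psum_rev (k m : ℕ) (hm : m ≤ k) (x : Fin k → ℝ) :
    psum k m (x ∘ Fin.rev) = psum k k x - psum k (k - m) x := by
  unfold psum
  have h1 : ∀ l ∈ Finset.range m, (if h : l < k then (x ∘ Fin.rev) ⟨l, h⟩ else 0)
      = if h : k - 1 - l < k then x ⟨k - 1 - l, h⟩ else 0 := by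
    intro l hl
    have hlk : l < k := lt_of_lt_of_le (Finset.mem_range.mp hl) hm
    have hrev : k - 1 - l < k := by omega
    simp only [hlk, dif_pos, hrev, Function.comp_apply, Fin.rev]
    exact congrArg x (Fin.ext (show k - (l + 1) = k - 1 - l by omega))
  rw [Finset.sum_congr rfl h1]
  have h2 : ∑ l ∈ Finset.range k, (if h : l < k then x ⟨l, h⟩ else 0)
      - ∑ l ∈ Finset.range (k - m), (if h : l < k then x ⟨l, h⟩ else 0)
      = ∑ l ∈ Finset.Ico (k - m) k, (if h : l < k then x ⟨l, h⟩ else 0) := by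
    have h3 := Finset.sum_range_add_sum_Ico
      (fun l => if h : l < k then x ⟨l, h⟩ else 0) (show k - m ≤ k by omega)
    linarith
  rw [h2]
  -- reindex: l ∈ range m ↦ k - 1 - l ∈ Ico (k-m) k
  refine Finset.sum_nbij' (fun l => k - 1 - l) (fun l => k - 1 - l) ?_ ?_ ?_ ?_ ?_
  · intro a ha
    simp only [Finset.mem_range] at ha
    simp only [Finset.mem_Ico]
    omega
  · intro a ha
    simp only [Finset.mem_Ico] at ha
    simp only [Finset.mem_range]
    omega
  · intro a ha
    simp only [Finset.mem_range] at ha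
    show k - 1 - (k - 1 - a) = a
    omega
  · intro a ha
    simp only [Finset.mem_Ico] at ha
    show k - 1 - (k - 1 - a) = a
    omega
  · intro a ha
    rfl


section revmap

variable (k : ℕ)

lemma rev_measurePreserving (μ0 : Measure ℝ) [IsProbabilityMeasure μ0] :
    Measure.map (fun x : Fin k → ℝ => x ∘ Fin.rev) (Measure.pi fun _ : Fin k => μ0)
      = Measure.pi fun _ : Fin k => μ0 := by
  have hr : Measurable (fun x : Fin k → ℝ => x ∘ Fin.rev) :=
    measurable_pi_lambda _ fun j => measurable_pi_apply _
  refine (Measure.pi_eq fun s hs => ?_).symm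
  rw [Measure.map_apply hr (MeasurableSet.univ_pi hs)]
  have hpre : (fun x : Fin k → ℝ => x ∘ Fin.rev) ⁻¹' Set.pi Set.univ s
      = Set.pi Set.univ (fun j => s (Fin.rev j)) := by
    ext x
    simp only [Set.mem_preimage, Set.mem_pi, Set.mem_univ, forall_true_left,
      Function.comp_apply]
    constructor
    · intro h j
      have := h (Fin.rev j)
      rwa [Fin.rev_rev] at this
    · intro h j
      have := h (Fin.rev j)
      rwa [Fin.rev_rev] at this
  rw [hpre, Measure.pi_pi]
  exact Equiv.prod_comp Fin.revPerm fun j => μ0 (s j)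

end revmap


lemma jointLaw {Ω : Type*} [MeasureSpace Ω] [IsProbabilityMeasure (ℙ : Measure Ω)]
    (X : ℕ → Ω → ℝ) (hmeas : ∀ i, Measurable (X i))
    (hindep : iIndepFun X ℙ)
    (hident : ∀ i, Measure.map (X i) ℙ = Measure.map (X 0) ℙ) (k : ℕ) :
    Measure.map (fun ω (j : Fin k) => X j ω) ℙ
      = Measure.pi (fun _ : Fin k => Measure.map (X 0) ℙ) := by
  have hV : Measurable (fun ω (j : Fin k) => X j ω) :=
    measurable_pi_lambda _ fun j => hmeas j
  haveI : IsProbabilityMeasure (Measure.map (X 0) ℙ) :=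
    Measure.isProbabilityMeasure_map (hmeas 0).aemeasurable
  refine (Measure.pi_eq (μ := fun _ : Fin k => Measure.map (X 0) ℙ) fun s hs => ?_).symm
  rw [Measure.map_apply hV (MeasurableSet.univ_pi hs)]
  classical
  set sets : ℕ → Set ℝ := fun m => if h : m < k then s ⟨m, h⟩ else Set.univ with hsets
  have hpre : (fun ω (j : Fin k) => X j ω) ⁻¹' Set.pi Set.univ s
      = ⋂ m ∈ Finset.range k, X m ⁻¹' sets m := by
    ext ω
    simp only [Set.mem_preimage, Set.mem_pi, Set.mem_univ, forall_true_left, Set.mem_iInter,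
      Finset.mem_range, hsets]
    constructor
    · intro h m hm
      simp only [hm, dif_pos]
      exact h ⟨m, hm⟩
    · intro h j
      have := h j j.isLt
      simpa [j.isLt] using this
  rw [hpre, hindep.measure_inter_preimage_eq_mul (Finset.range k)
    (fun m hm => by
      by_cases h : m < k
      · simpa [hsets, h] using hs ⟨m, h⟩
      · simp [hsets, h])]
  rw [Finset.prod_range fun m => ℙ (X m ⁻¹' sets m)]
  refine Finset.prod_congr rfl fun j _ => ?_
  have h1 : sets (j : ℕ) = s j := by simp [hsets, j.isLt]
  rw [h1, ← Measure.map_apply (hmeas j) (hs j), hident j]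

lemma psum_apply {Ω : Type*} (X : ℕ → Ω → ℝ) (k m : ℕ) (hm : m ≤ k) (ω : Ω) :
    psum k m (fun j : Fin k => X j ω) = ∑ l ∈ Finset.range m, X l ω := by
  unfold psum
  refine Finset.sum_congr rfl fun l hl => ?_
  have : l < k := lt_of_lt_of_le (Finset.mem_range.mp hl) hm
  simp [this]

lemma key_duality {Ω : Type*} [MeasureSpace Ω] [IsProbabilityMeasure (ℙ : Measure Ω)]
    (X : ℕ → Ω → ℝ) (hmeas : ∀ i, Measurable (X i))
    (hindep : iIndepFun X ℙ)
    (hident : ∀ i, Measure.map (X i) ℙ = Measure.map (X 0) ℙ)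
    (i k : ℕ) (hik : i ≤ k) (A : Set ℝ) (hA : MeasurableSet A) :
    ℙ {ω | ((∑ l ∈ Finset.range (k - i), X l ω) - ∑ l ∈ Finset.range k, X l ω) ∈ A ∧
        ∀ j < k, (∑ l ∈ Finset.range k, X l ω) < ∑ l ∈ Finset.range j, X l ω}
    = ℙ {ω | (-∑ l ∈ Finset.range i, X l ω) ∈ A ∧
        ∀ j, 1 ≤ j → j ≤ k → (∑ l ∈ Finset.range j, X l ω) < 0} := by
  classical
  set μ0 := Measure.map (X 0) ℙ with hμ0
  haveI : IsProbabilityMeasure μ0 := Measure.isProbabilityMeasure_map (hmeas 0).aemeasurable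
  set V : Ω → (Fin k → ℝ) := fun ω j => X j ω with hVdef
  have hV : Measurable V := measurable_pi_lambda _ fun j => hmeas j
  set E1 : Set (Fin k → ℝ) :=
    {x | psum k (k - i) x - psum k k x ∈ A ∧ ∀ j < k, psum k k x < psum k j x} with hE1def
  set E2 : Set (Fin k → ℝ) :=
    {x | -psum k i x ∈ A ∧ ∀ j, 1 ≤ j → j ≤ k → psum k j x < 0} with hE2def
  have hE1 : MeasurableSet E1 := by
    refine MeasurableSet.inter ?_ ?_
    · exact ((psum_meas k (k - i)).sub (psum_meas k k)) hA
    · show MeasurableSet {x : Fin k → ℝ | ∀ j < k, psum k k x < psum k j x}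
      rw [show {x : Fin k → ℝ | ∀ j < k, psum k k x < psum k j x}
          = ⋂ j, ⋂ (_ : j < k), {x | psum k k x < psum k j x} by ext x; simp]
      exact MeasurableSet.iInter fun j => MeasurableSet.iInter fun _ =>
        measurableSet_lt (psum_meas k k) (psum_meas k j)
  have hE2 : MeasurableSet E2 := by
    refine MeasurableSet.inter ?_ ?_
    · exact ((psum_meas k i).neg) hA
    · show MeasurableSet {x : Fin k → ℝ | ∀ j, 1 ≤ j → j ≤ k → psum k j x < 0}
      rw [show {x : Fin k → ℝ | ∀ j, 1 ≤ j → j ≤ k → psum k j x < 0}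
          = ⋂ j, ⋂ (_ : 1 ≤ j), ⋂ (_ : j ≤ k), {x | psum k j x < 0} by ext x; simp]
      exact MeasurableSet.iInter fun j => MeasurableSet.iInter fun _ =>
        MeasurableSet.iInter fun _ => measurableSet_lt (psum_meas k j) measurable_const
  have hset1 : {ω | ((∑ l ∈ Finset.range (k - i), X l ω) - ∑ l ∈ Finset.range k, X l ω) ∈ A ∧
        ∀ j < k, (∑ l ∈ Finset.range k, X l ω) < ∑ l ∈ Finset.range j, X l ω}
      = V ⁻¹' E1 := by
    ext ω
    simp only [Set.mem_setOf_eq, Set.mem_preimage, hE1def]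
    rw [psum_apply X k (k - i) (Nat.sub_le k i), psum_apply X k k le_rfl]
    constructor
    · rintro ⟨h1, h2⟩
      exact ⟨h1, fun j hj => by rw [psum_apply X k j hj.le]; exact h2 j hj⟩
    · rintro ⟨h1, h2⟩
      exact ⟨h1, fun j hj => by have := h2 j hj; rwa [psum_apply X k j hj.le] at this⟩
  have hset2 : {ω | (-∑ l ∈ Finset.range i, X l ω) ∈ A ∧
        ∀ j, 1 ≤ j → j ≤ k → (∑ l ∈ Finset.range j, X l ω) < 0}
      = V ⁻¹' E2 := by
    ext ω
    simp only [Set.mem_setOf_eq, Set.mem_preimage, hE2def]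
    rw [psum_apply X k i hik]
    constructor
    · rintro ⟨h1, h2⟩
      exact ⟨h1, fun j hj1 hjk => by rw [psum_apply X k j hjk]; exact h2 j hj1 hjk⟩
    · rintro ⟨h1, h2⟩
      exact ⟨h1, fun j hj1 hjk => by
        have := h2 j hj1 hjk; rwa [psum_apply X k j hjk] at this⟩
  have hpreE : (fun x : Fin k → ℝ => x ∘ Fin.rev) ⁻¹' E1 = E2 := by
    ext x
    simp only [Set.mem_preimage, hE1def, hE2def, Set.mem_setOf_eq]
    have e2 : psum k k (x ∘ Fin.rev) = psum k k x := by
      rw [psum_rev k k le_rfl, Nat.sub_self, psum_zero]; ring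
    have e1 : psum k (k - i) (x ∘ Fin.rev) - psum k k (x ∘ Fin.rev) = -psum k i x := by
      rw [psum_rev k (k - i) (Nat.sub_le k i), Nat.sub_sub_self hik, e2]; ring
    rw [e1]
    constructor
    · rintro ⟨h1, h2⟩
      refine ⟨h1, fun m h1m hmk => ?_⟩
      have hj : k - m < k := by omega
      have := h2 (k - m) hj
      rw [e2, psum_rev k (k - m) (Nat.sub_le k m), Nat.sub_sub_self hmk] at this
      linarith
    · rintro ⟨h1, h2⟩
      refine ⟨h1, fun j hj => ?_⟩
      rw [e2, psum_rev k j hj.le]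
      have := h2 (k - j) (by omega) (Nat.sub_le k j)
      linarith
  have hr : Measurable (fun x : Fin k → ℝ => x ∘ Fin.rev) :=
    measurable_pi_lambda _ fun j => measurable_pi_apply _
  have hmapV := jointLaw X hmeas hindep hident k
  rw [hset1, hset2, ← Measure.map_apply hV hE1, ← Measure.map_apply hV hE2, hmapV]
  conv_lhs => rw [← rev_measurePreserving k μ0]
  rw [Measure.map_apply hr hE1, hpreE]

def E1set (k i : ℕ) (A : Set ℝ) : Set (Fin k → ℝ) :=
  {x | psum k (k - i) x - psum k k x ∈ A ∧ ∀ j < k, psum k k x < psum k j x}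

lemma E1set_meas (k i : ℕ) (A : Set ℝ) (hA : MeasurableSet A) :
    MeasurableSet (E1set k i A) := by
  refine MeasurableSet.inter ?_ ?_
  · exact ((psum_meas k (k - i)).sub (psum_meas k k)) hA
  · show MeasurableSet {x : Fin k → ℝ | ∀ j < k, psum k k x < psum k j x}
    rw [show {x : Fin k → ℝ | ∀ j < k, psum k k x < psum k j x}
        = ⋂ j, ⋂ (_ : j < k), {x | psum k k x < psum k j x} by ext x; simp]
    exact MeasurableSet.iInter fun j => MeasurableSet.iInter fun _ =>
      measurableSet_lt (psum_meas k k) (psum_meas k j)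

def Fset (r : ℕ) : Set (Fin r → ℝ) := {y | ∀ m, 1 ≤ m → m ≤ r → 0 ≤ psum r m y}

lemma Fset_meas (r : ℕ) : MeasurableSet (Fset r) := by
  show MeasurableSet {y : Fin r → ℝ | ∀ m, 1 ≤ m → m ≤ r → 0 ≤ psum r m y}
  rw [show {y : Fin r → ℝ | ∀ m, 1 ≤ m → m ≤ r → 0 ≤ psum r m y}
      = ⋂ m, ⋂ (_ : 1 ≤ m), ⋂ (_ : m ≤ r), {y | 0 ≤ psum r m y} by ext y; simp]
  exact MeasurableSet.iInter fun m => MeasurableSet.iInter fun _ =>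
    MeasurableSet.iInter fun _ => measurableSet_le measurable_const (psum_meas r m)

lemma V_preimage_E1set {Ω : Type*} (X : ℕ → Ω → ℝ) (k i : ℕ) (hik : i ≤ k) (A : Set ℝ) :
    (fun ω (j : Fin k) => X j ω) ⁻¹' E1set k i A
      = {ω | ((∑ l ∈ Finset.range (k - i), X l ω) - ∑ l ∈ Finset.range k, X l ω) ∈ A ∧
          ∀ j < k, (∑ l ∈ Finset.range k, X l ω) < ∑ l ∈ Finset.range j, X l ω} := by
  ext ω
  simp only [Set.mem_setOf_eq, Set.mem_preimage, E1set]
  rw [psum_apply X k (k - i) (Nat.sub_le k i), psum_apply X k k le_rfl]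
  constructor
  · rintro ⟨h1, h2⟩
    exact ⟨h1, fun j hj => by have := h2 j hj; rwa [psum_apply X k j hj.le] at this⟩
  · rintro ⟨h1, h2⟩
    exact ⟨h1, fun j hj => by rw [psum_apply X k j hj.le]; exact h2 j hj⟩

theorem stmt2 {Ω : Type*} [MeasureSpace Ω] [IsProbabilityMeasure (ℙ : Measure Ω)]
    (X : ℕ → Ω → ℝ) (hmeas : ∀ i, Measurable (X i))
    (hindep : iIndepFun X ℙ)
    (hident : ∀ i, Measure.map (X i) ℙ = Measure.map (X 0) ℙ)
    (S L M : ℕ → Ω → ℝ) (τ : ℕ → Ω → ℕ)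
    (hS : ∀ n ω, S n ω = ∑ i ∈ Finset.range n, X i ω)
    (hL : ∀ n ω, L n ω = (Finset.range (n+1)).inf' Finset.nonempty_range_add_one
      (fun j => S j ω))
    (hM : ∀ (k : ℕ) (hk : 1 ≤ k) (ω : Ω),
      M k ω = (Finset.Icc 1 k).sup' (Finset.nonempty_Icc.mpr hk) (fun j => S j ω))
    (hτ : ∀ n ω, τ n ω = sInf {i | i ≤ n ∧ S i ω = L n ω})
    (i k n : ℕ) (hi : 1 ≤ i) (hik : i ≤ k) (hkn : k ≤ n)
    (hpos : 0 < ℙ {ω | M k ω < 0})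
    (A : Set ℝ) (hA : MeasurableSet A) :
    ℙ {ω | S (τ n ω - i) ω - S (τ n ω) ω ∈ A ∧ τ n ω = k}
      = (ℙ[|{ω | M k ω < 0}]) {ω | -S i ω ∈ A} * ℙ {ω | τ n ω = k} := by
  classical
  have hk1 : 1 ≤ k := le_trans hi hik
  -- basic facts about L
  have hLmem : ∀ ω, ∃ j, j ≤ n ∧ S j ω = L n ω := by
    intro ω
    obtain ⟨j, hj, hje⟩ := Finset.exists_mem_eq_inf'
      (Finset.nonempty_range_add_one (n := n)) (fun j => S j ω)
    exact ⟨j, Nat.lt_succ_iff.mp (Finset.mem_range.mp hj), by rw [hL n ω, hje]⟩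
  have hLle : ∀ ω j, j ≤ n → L n ω ≤ S j ω := by
    intro ω j hj
    rw [hL n ω]
    exact Finset.inf'_le _ (Finset.mem_range.mpr (Nat.lt_succ_iff.mpr hj))
  -- characterization of τ = k
  have hτiff : ∀ ω, τ n ω = k ↔
      ((∀ j < k, S k ω < S j ω) ∧ ∀ j, k < j → j ≤ n → S k ω ≤ S j ω) := by
    intro ω
    have hTne : {i | i ≤ n ∧ S i ω = L n ω}.Nonempty := by
      obtain ⟨j, hj, he⟩ := hLmem ω; exact ⟨j, hj, he⟩
    constructor
    · intro h
      rw [hτ n ω] at h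
      have hmem : k ∈ {i | i ≤ n ∧ S i ω = L n ω} := h ▸ Nat.sInf_mem hTne
      obtain ⟨hkn', hSk⟩ := hmem
      constructor
      · intro j hj
        have hjn : j ≤ n := le_trans hj.le hkn'
        have hjT : j ∉ {i | i ≤ n ∧ S i ω = L n ω} := by
          intro hjT
          have := Nat.sInf_le hjT
          omega
        have hne : S j ω ≠ L n ω := fun hc => hjT ⟨hjn, hc⟩
        rw [hSk]
        exact lt_of_le_of_ne (hLle ω j hjn) (Ne.symm hne)
      · intro j hkj hjn
        rw [hSk]
        exact hLle ω j hjn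
    · rintro ⟨hB, hC⟩
      have hSkL : S k ω = L n ω := by
        obtain ⟨j0, hj0n, hj0⟩ := hLmem ω
        rcases lt_trichotomy j0 k with h | h | h
        · exfalso
          have h1 := hB j0 h
          rw [hj0] at h1
          exact absurd (hLle ω k hkn) (not_le.mpr h1)
        · rw [← h]; exact hj0
        · have h1 := hC j0 h hj0n
          rw [hj0] at h1
          exact le_antisymm h1 (hLle ω k hkn)
      rw [hτ n ω]
      refine le_antisymm (Nat.sInf_le ⟨hkn, hSkL⟩) ?_
      by_contra hlt
      push_neg at hlt
      have hmem := Nat.sInf_mem hTne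
      have h1 := hB _ hlt
      rw [hmem.2] at h1
      exact absurd (hLle ω k hkn) (not_le.mpr h1)
  -- notation
  set V : Ω → (Fin k → ℝ) := fun ω j => X j ω with hVdef
  set W : Ω → (Fin (n - k) → ℝ) := fun ω j => X (k + j) ω with hWdef
  have hV : Measurable V := measurable_pi_lambda _ fun j => hmeas j
  have hW : Measurable W := measurable_pi_lambda _ fun j => hmeas (k + j)
  -- the event {τ = k} splits
  have hsum : ∀ ω m, ∑ t ∈ Finset.range m, X (k + t) ω = S (k + m) ω - S k ω := by
    intro ω m
    rw [hS (k + m) ω, hS k ω, ← Finset.sum_Ico_eq_sub _ (Nat.le_add_right k m),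
      Finset.sum_Ico_eq_sum_range]
    simp
  have hCeq : {ω | ∀ j, k < j → j ≤ n → S k ω ≤ S j ω} = W ⁻¹' Fset (n - k) := by
    ext ω
    simp only [Set.mem_setOf_eq, Set.mem_preimage, Fset]
    constructor
    · intro h m h1m hmnk
      rw [psum_apply (fun t => X (k + t)) (n - k) m hmnk, hsum ω m, sub_nonneg]
      exact h (k + m) (by omega) (by omega)
    · intro h j hkj hjn
      have h1 := h (j - k) (by omega) (by omega)
      rw [psum_apply (fun t => X (k + t)) (n - k) (j - k) (by omega), hsum ω (j - k),
        sub_nonneg] at h1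
      have : k + (j - k) = j := by omega
      rwa [this] at h1
  have hDeq : ∀ (A' : Set ℝ),
      {ω | (S (k - i) ω - S k ω ∈ A') ∧ ∀ j < k, S k ω < S j ω} = V ⁻¹' E1set k i A' := by
    intro A'
    rw [V_preimage_E1set X k i hik A']
    ext ω
    simp only [Set.mem_setOf_eq]
    rw [← hS (k - i) ω, ← hS k ω]
    constructor
    · rintro ⟨h1, h2⟩
      exact ⟨h1, fun j hj => by rw [← hS j ω]; exact h2 j hj⟩
    · rintro ⟨h1, h2⟩
      exact ⟨h1, fun j hj => by have := h2 j hj; rwa [← hS j ω] at this⟩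
  have hτset : {ω | τ n ω = k} = (V ⁻¹' E1set k i Set.univ) ∩ (W ⁻¹' Fset (n - k)) := by
    rw [← hDeq Set.univ, ← hCeq]
    ext ω
    simp only [Set.mem_setOf_eq, Set.mem_inter_iff, hτiff ω, Set.mem_univ, true_and]
  have hmainset : {ω | S (τ n ω - i) ω - S (τ n ω) ω ∈ A ∧ τ n ω = k}
      = (V ⁻¹' E1set k i A) ∩ (W ⁻¹' Fset (n - k)) := by
    rw [← hDeq A, ← hCeq]
    ext ω
    simp only [Set.mem_setOf_eq, Set.mem_inter_iff]
    constructor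
    · rintro ⟨h1, h2⟩
      have h3 := (hτiff ω).mp h2
      rw [h2] at h1
      exact ⟨⟨h1, h3.1⟩, h3.2⟩
    · rintro ⟨⟨h1, h2⟩, h3⟩
      have h4 : τ n ω = k := (hτiff ω).mpr ⟨h2, h3⟩
      rw [h4]
      exact ⟨h1, rfl⟩
  -- independence
  have hdisj : Disjoint (Finset.range k) (Finset.Ico k n) := by
    rw [Finset.disjoint_left]
    intro m hm hm2
    simp only [Finset.mem_range] at hm
    simp only [Finset.mem_Ico] at hm2
    omega
  have hind0 := hindep.indepFun_finset (Finset.range k) (Finset.Ico k n) hdisj hmeas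
  have hg1 : Measurable (fun (y : {x // x ∈ Finset.range k} → ℝ) (j : Fin k) =>
      y ⟨(j : ℕ), Finset.mem_range.mpr j.isLt⟩) :=
    measurable_pi_lambda _ fun j => measurable_pi_apply _
  have hg2 : Measurable (fun (y : {x // x ∈ Finset.Ico k n} → ℝ) (m : Fin (n - k)) =>
      y ⟨k + (m : ℕ), Finset.mem_Ico.mpr ⟨Nat.le_add_right _ _, by omega⟩⟩) :=
    measurable_pi_lambda _ fun j => measurable_pi_apply _
  have hindVW : IndepFun V W ℙ := hind0.comp hg1 hg2
  have hmul : ∀ (A' : Set ℝ), MeasurableSet A' →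
      ℙ ((V ⁻¹' E1set k i A') ∩ (W ⁻¹' Fset (n - k)))
        = ℙ (V ⁻¹' E1set k i A') * ℙ (W ⁻¹' Fset (n - k)) := by
    intro A' hA'
    exact hindVW.measure_inter_preimage_eq_mul (E1set k i A') (Fset (n - k))
      (E1set_meas k i A' hA') (Fset_meas (n - k))
  -- measurability of S and the conditioning event
  have hSmeas : ∀ j, Measurable (S j) := by
    intro j
    have h : S j = fun ω => ∑ l ∈ Finset.range j, X l ω := funext fun ω => hS j ω
    rw [h]
    exact Finset.measurable_sum _ fun l _ => hmeas l
  have hc : {ω | M k ω < 0} = {ω | ∀ j, 1 ≤ j → j ≤ k → S j ω < 0} := by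
    ext ω
    rw [Set.mem_setOf_eq, hM k hk1 ω, Finset.sup'_lt_iff]
    simp only [Finset.mem_Icc, Set.mem_setOf_eq, and_imp]
  have hcmeas : MeasurableSet {ω | M k ω < 0} := by
    rw [hc, show {ω | ∀ j, 1 ≤ j → j ≤ k → S j ω < 0}
        = ⋂ j, ⋂ (_ : 1 ≤ j), ⋂ (_ : j ≤ k), {ω | S j ω < 0} by ext ω; simp]
    exact MeasurableSet.iInter fun j => MeasurableSet.iInter fun _ =>
      MeasurableSet.iInter fun _ => measurableSet_lt (hSmeas j) measurable_const
  -- duality applications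
  have hkeyA : ℙ (V ⁻¹' E1set k i A)
      = ℙ ({ω | M k ω < 0} ∩ {ω | -S i ω ∈ A}) := by
    rw [V_preimage_E1set X k i hik A, key_duality X hmeas hindep hident i k hik A hA]
    congr 1
    ext ω
    rw [Set.mem_inter_iff, hc]
    simp only [Set.mem_setOf_eq]
    rw [← hS i ω]
    constructor
    · rintro ⟨h1, h2⟩
      refine ⟨fun j hj1 hjk => ?_, h1⟩
      have := h2 j hj1 hjk
      rwa [← hS j ω] at this
    · rintro ⟨h2, h1⟩
      refine ⟨h1, fun j hj1 hjk => ?_⟩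
      rw [← hS j ω]
      exact h2 j hj1 hjk
  have hkeyU : ℙ (V ⁻¹' E1set k i Set.univ) = ℙ {ω | M k ω < 0} := by
    rw [V_preimage_E1set X k i hik Set.univ,
      key_duality X hmeas hindep hident i k hik Set.univ MeasurableSet.univ]
    congr 1
    ext ω
    rw [hc]
    simp only [Set.mem_setOf_eq, Set.mem_univ, true_and]
    constructor
    · intro h2 j hj1 hjk
      have := h2 j hj1 hjk
      rwa [← hS j ω] at this
    · intro h2 j hj1 hjk
      rw [← hS j ω]
      exact h2 j hj1 hjk
  -- conclusion
  rw [hmainset, hτset, hmul A hA, hmul Set.univ MeasurableSet.univ, hkeyA, hkeyU,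
    cond_apply hcmeas ℙ]
  have h1 : (ℙ {ω | M k ω < 0})⁻¹ * ℙ {ω | M k ω < 0} = 1 :=
    ENNReal.inv_mul_cancel hpos.ne' (measure_ne_top _ _)
  calc ℙ ({ω | M k ω < 0} ∩ {ω | -S i ω ∈ A}) * ℙ (W ⁻¹' Fset (n - k))
      = ((ℙ {ω | M k ω < 0})⁻¹ * ℙ {ω | M k ω < 0})
          * (ℙ ({ω | M k ω < 0} ∩ {ω | -S i ω ∈ A}) * ℙ (W ⁻¹' Fset (n - k))) := by
        rw [h1, one_mul]
    _ = (ℙ {ω | M k ω < 0})⁻¹ * ℙ ({ω | M k ω < 0} ∩ {ω | -S i ω ∈ A})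
          * (ℙ {ω | M k ω < 0} * ℙ (W ⁻¹' Fset (n - k))) := by ring
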